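/- FWER control under weakened size condition: The conclusion of Theorem 1 still holds if condition (D4) is weakened to (D4'): E_P[δ_m(α)] ≤ α for every m ∈ 𝓜₀ and every α ∈ [0,1]. That is, under (D1)–(D3), (D4') and (A1)–(A3), for every q ∈ [0,1], P(S₀(α†(q)) ≥ 1) ≤ q. -/

import Mathlib

/-!
Statement 2: Strong FWER control under weakened size condition (D4').
Under (D1)–(D3), (D4') for the multiple decision process Δ = (δ_m) and (A1)–(A3) for the
multiple decision size function A = (A_m), for every probability measure P and every
q ∈ [0,1], P(S₀(α†(q)) ≥ 1) ≤ q.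
-/

open MeasureTheory ProbabilityTheory Function Set
open Filter Topology
open scoped ENNReal

noncomputable section

/-- The number of false discoveries `S₀(α) = ∑_{m ∈ 𝓜₀} δ_m(A_m(α))`. -/
def Szero {X ι : Type*} [Fintype ι] (M0 : Finset ι) (A : ι → ℝ → ℝ)
    (δ : ι → ℝ → X → ℝ) (α : ℝ) (x : X) : ℝ :=
  ∑ m ∈ M0, δ m (A m α) x

/-- The process `H₁(α) = ∏_{m ∈ 𝓜} (1 - A_m(α))^{1 - δ_m(A_m(α)-)}`, where
`δ_m(A_m(α)-)` denotes the left-hand limit of the path `β ↦ δ_m(β)` at `A_m(α)`. -/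
def Hone {X ι : Type*} [Fintype ι] (A : ι → ℝ → ℝ)
    (δ : ι → ℝ → X → ℝ) (α : ℝ) (x : X) : ℝ :=
  ∏ m, (1 - A m α) ^ (1 - Function.leftLim (fun β => δ m β x) (A m α))

/-- The first crossing time `α†(q) = inf {α ∈ [0,1] : H₁(α) < 1 - q}` (with `inf ∅ = 1`). -/
def alphaDag {X ι : Type*} [Fintype ι] (A : ι → ℝ → ℝ)
    (δ : ι → ℝ → X → ℝ) (q : ℝ) (x : X) : ℝ :=
  sInf ({α ∈ Set.Icc (0:ℝ) 1 | Hone A δ α x < 1 - q} ∪ {1})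

/-- The σ-algebra generated by the decision process `α ↦ δ_m(α)`, `α ∈ [0,1]`. -/
def procSigma {X : Type*} (δm : ℝ → X → ℝ) : MeasurableSpace X :=
  ⨆ α ∈ Set.Icc (0:ℝ) 1, MeasurableSpace.comap (δm α) Real.measurableSpace

/-- If `f` is constant equal to `y` on `Ioo a c` with `a < c`, its left limit at `c` is `y`. -/
lemma leftLim_eq_const' {f : ℝ → ℝ} {a c y : ℝ} (hac : a < c)
    (h : ∀ β ∈ Set.Ioo a c, f β = y) : Function.leftLim f c = y := by
  refine leftLim_eq_of_tendsto (h := nhdsWithin_Iio_self_neBot' ⟨a, hac⟩) ?_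
  refine Tendsto.congr' ?_ tendsto_const_nhds
  filter_upwards [Ioo_mem_nhdsLT hac] with β hβ
  exact (h β hβ).symm

/-- Crossing-time facts for a single monotone right-continuous `{0,1}`-valued decision path
composed with a continuous monotone size function. -/
lemma crossing_facts {f : ℝ → ℝ} {A : ℝ → ℝ}
    (hfmono : MonotoneOn f (Set.Icc 0 1))
    (hfrc : ∀ c ∈ Set.Ico (0:ℝ) 1, ContinuousWithinAt f (Set.Ici c) c)
    (hfv : ∀ β ∈ Set.Icc (0:ℝ) 1, f β = 0 ∨ f β = 1)
    (hf1 : f 1 = 1)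
    (hAr : ∀ α ∈ Set.Icc (0:ℝ) 1, A α ∈ Set.Icc (0:ℝ) 1)
    (hAcont : ContinuousOn A (Set.Icc 0 1))
    (hAmono : MonotoneOn A (Set.Icc 0 1))
    (hA1 : A 1 = 1) :
    sInf {α ∈ Set.Icc (0:ℝ) 1 | f (A α) = 1} ∈ Set.Icc (0:ℝ) 1 ∧
    f (A (sInf {α ∈ Set.Icc (0:ℝ) 1 | f (A α) = 1})) = 1 ∧
    (∀ α ∈ Set.Icc (0:ℝ) 1, sInf {α ∈ Set.Icc (0:ℝ) 1 | f (A α) = 1} ≤ α → f (A α) = 1) ∧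
    (∀ α ∈ Set.Icc (0:ℝ) 1, α < sInf {α ∈ Set.Icc (0:ℝ) 1 | f (A α) = 1} → f (A α) = 0) := by
  set S := {α ∈ Set.Icc (0:ℝ) 1 | f (A α) = 1} with hS
  have h1mem : (1:ℝ) ∈ S := by
    refine ⟨⟨zero_le_one, le_rfl⟩, ?_⟩
    rw [hA1, hf1]
  have hne : S.Nonempty := ⟨1, h1mem⟩
  have hbdd : BddBelow S := ⟨0, fun a ha => ha.1.1⟩
  set T := sInf S with hT
  have hT0 : 0 ≤ T := le_csInf hne fun a ha => ha.1.1
  have hT1 : T ≤ 1 := csInf_le hbdd h1mem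
  have hTIcc : T ∈ Set.Icc (0:ℝ) 1 := ⟨hT0, hT1⟩
  have hlow : ∀ α ∈ Set.Icc (0:ℝ) 1, α < T → f (A α) = 0 := by
    intro α hα hαT
    rcases hfv (A α) (hAr α hα) with h | h
    · exact h
    · exact absurd (csInf_le hbdd ⟨hα, h⟩) (not_le.2 hαT)
  have hattain : f (A T) = 1 := by
    by_contra h
    have hfT : f (A T) = 0 := (hfv (A T) (hAr T hTIcc)).resolve_right h
    -- T < 1 since f (A 1) = 1
    have hTlt1 : T < 1 := by
      rcases lt_or_eq_of_le hT1 with h' | h'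
      · exact h'
      · rw [h', hA1, hf1] at hfT; norm_num at hfT
    -- A T < 1
    have hATlt1 : A T < 1 := by
      rcases lt_or_eq_of_le (hAr T hTIcc).2 with h' | h'
      · exact h'
      · rw [h', hf1] at hfT; norm_num at hfT
    have hrc := hfrc (A T) ⟨(hAr T hTIcc).1, hATlt1⟩
    rw [ContinuousWithinAt, hfT] at hrc
    have hev1 : ∀ᶠ β in 𝓝[Set.Ici (A T)] (A T), f β < 1 :=
      hrc (isOpen_Iio.mem_nhds (by norm_num : (0:ℝ) ∈ Set.Iio 1))
    -- transfer along A
    have hAtend : Tendsto A (𝓝[Set.Icc T 1] T) (𝓝[Set.Ici (A T)] (A T)) := by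
      rw [tendsto_nhdsWithin_iff]
      constructor
      · exact (hAcont T hTIcc).mono (Set.Icc_subset_Icc hT0 le_rfl)
      · filter_upwards [self_mem_nhdsWithin] with α hα
        exact hAmono hTIcc ⟨hT0.trans hα.1, hα.2⟩ hα.1
    have hev2 : ∀ᶠ α in 𝓝[Set.Icc T 1] T, f (A α) < 1 := hAtend.eventually hev1
    rw [Filter.eventually_iff, Metric.mem_nhdsWithin_iff] at hev2
    obtain ⟨ε, hε, hball⟩ := hev2
    have hlb : ∀ a ∈ S, T + min ε (1 - T) ≤ a := by
      intro a ha
      by_contra hcon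
      push_neg at hcon
      have haT : T ≤ a := csInf_le hbdd ha
      have haball : a ∈ Metric.ball T ε ∩ Set.Icc T 1 := by
        constructor
        · rw [Metric.mem_ball, Real.dist_eq, abs_of_nonneg (by linarith)]
          exact lt_of_lt_of_le (by linarith [hcon]) (min_le_left _ _)
        · exact ⟨haT, ha.1.2⟩
      have := hball haball
      rw [Set.mem_setOf_eq, ha.2] at this
      norm_num at this
    have : T + min ε (1 - T) ≤ T := le_csInf hne hlb
    have hpos : 0 < min ε (1 - T) := lt_min hε (by linarith)
    linarith
  refine ⟨hTIcc, hattain, ?_, hlow⟩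
  intro α hα hTα
  have h1 : f (A T) ≤ f (A α) := hfmono (hAr T hTIcc) (hAr α hα) (hAmono hTIcc hα hTα)
  rw [hattain] at h1
  rcases hfv (A α) (hAr α hα) with h | h
  · rw [h] at h1; norm_num at h1
  · exact h

/-- Deterministic core: on a "good" point `x`, a false rejection at `α†(q)` forces a false
rejection at the deterministic time `s* = sup {s : ∏_{m ∈ M0}(1 - A_m(s)) ≥ 1 - q}`. -/
lemma det_key {X ι : Type*} [Fintype ι] [DecidableEq ι]
    (M0 M1 : Finset ι) (hpart : M0 ∪ M1 = Finset.univ) (hdisj : Disjoint M0 M1)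
    (δ : ι → ℝ → X → ℝ) (A : ι → ℝ → ℝ) (x : X)
    (hvals : ∀ m, ∀ α ∈ Set.Icc (0:ℝ) 1, δ m α x = 0 ∨ δ m α x = 1)
    (h01 : ∀ m, δ m 0 x = 0 ∧ δ m 1 x = 1)
    (hpath : ∀ m, MonotoneOn (fun α => δ m α x) (Set.Icc 0 1) ∧
      ∀ α ∈ Set.Ico (0:ℝ) 1, ContinuousWithinAt (fun β => δ m β x) (Set.Ici α) α)
    (hArange : ∀ m, ∀ α ∈ Set.Icc (0:ℝ) 1, A m α ∈ Set.Icc (0:ℝ) 1)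
    (hA1 : ∀ m, A m 0 = 0 ∧ A m 1 = 1)
    (hA2 : ∀ m, ContinuousOn (A m) (Set.Icc 0 1) ∧ StrictMonoOn (A m) (Set.Icc 0 1))
    (q : ℝ) (hq : q ∈ Set.Icc (0:ℝ) 1) (hM0 : M0.Nonempty)
    (hx : 1 ≤ Szero M0 A δ (alphaDag A δ q x) x) :
    ∃ m ∈ M0,
      δ m (A m (sSup {s ∈ Set.Icc (0:ℝ) 1 | 1 - q ≤ ∏ m ∈ M0, (1 - A m s)})) x = 1 := by
  classical
  set G : ℝ → ℝ := fun s => ∏ m ∈ M0, (1 - A m s) with hG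
  set SS : Set ℝ := {s ∈ Set.Icc (0:ℝ) 1 | 1 - q ≤ G s} with hSS
  have hG0 : G 0 = 1 := Finset.prod_eq_one fun m _ => by rw [(hA1 m).1, sub_zero]
  have h0SS : (0:ℝ) ∈ SS := ⟨⟨le_rfl, zero_le_one⟩, by rw [hG0]; linarith [hq.1]⟩
  have hSSbdd : BddAbove SS := ⟨1, fun s hs => hs.1.2⟩
  set sstar := sSup SS with hsstar
  have hsstarIcc : sstar ∈ Set.Icc (0:ℝ) 1 :=
    ⟨le_csSup hSSbdd h0SS, csSup_le ⟨0, h0SS⟩ fun s hs => hs.1.2⟩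
  -- crossing facts for each m
  set T : ι → ℝ := fun m => sInf {α ∈ Set.Icc (0:ℝ) 1 | δ m (A m α) x = 1} with hTdef
  have hcf : ∀ m, T m ∈ Set.Icc (0:ℝ) 1 ∧ δ m (A m (T m)) x = 1 ∧
      (∀ α ∈ Set.Icc (0:ℝ) 1, T m ≤ α → δ m (A m α) x = 1) ∧
      (∀ α ∈ Set.Icc (0:ℝ) 1, α < T m → δ m (A m α) x = 0) := fun m =>
    crossing_facts (hpath m).1 (hpath m).2 (hvals m) (h01 m).2 (hArange m)
      (hA2 m).1 ((hA2 m).2.monotoneOn) (hA1 m).2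
  -- the first false rejection time
  obtain ⟨m1, hm1, hmin⟩ := M0.exists_min_image T hM0
  -- facts about α†
  set U : Set ℝ := {α ∈ Set.Icc (0:ℝ) 1 | Hone A δ α x < 1 - q} ∪ {1} with hU
  have h1U : (1:ℝ) ∈ U := Or.inr rfl
  have hUbdd : BddBelow U := ⟨0, by rintro a (⟨ha, _⟩ | rfl); exacts [ha.1, zero_le_one]⟩
  have hαdIcc : alphaDag A δ q x ∈ Set.Icc (0:ℝ) 1 := by
    constructor
    · exact le_csInf ⟨1, h1U⟩ (by rintro a (⟨ha, _⟩ | rfl); exacts [ha.1, zero_le_one])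
    · exact csInf_le hUbdd h1U
  -- some null is rejected at α†
  have hm0 : ∃ m0 ∈ M0, δ m0 (A m0 (alphaDag A δ q x)) x = 1 := by
    by_contra hcon
    push_neg at hcon
    have : Szero M0 A δ (alphaDag A δ q x) x = 0 := by
      refine Finset.sum_eq_zero fun m hm => ?_
      rcases hvals m (A m (alphaDag A δ q x)) (hArange m _ hαdIcc) with h | h
      · exact h
      · exact absurd h (hcon m hm)
    rw [this] at hx; norm_num at hx
  obtain ⟨m0, hm0M, hm0δ⟩ := hm0
  have hT0αd : T m0 ≤ alphaDag A δ q x :=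
    csInf_le ⟨0, fun a ha => ha.1.1⟩ ⟨hαdIcc, hm0δ⟩
  have hTm1αd : T m1 ≤ alphaDag A δ q x := (hmin m0 hm0M).trans hT0αd
  -- key bound: 1 - q ≤ G α for all α ∈ Ioo 0 (T m1)
  have hGbound : ∀ α ∈ Set.Ioo (0:ℝ) (T m1), 1 - q ≤ G α := by
    intro α hα
    have hαIcc : α ∈ Set.Icc (0:ℝ) 1 := ⟨hα.1.le, hα.2.le.trans (hcf m1).1.2⟩
    -- (i) 1 - q ≤ Hone α x since α < α†
    have hHge : 1 - q ≤ Hone A δ α x := by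
      by_contra hlt
      push_neg at hlt
      have : alphaDag A δ q x ≤ α := csInf_le hUbdd (Or.inl ⟨hαIcc, hlt⟩)
      have : α < α := lt_of_lt_of_le (lt_of_lt_of_le hα.2 hTm1αd) this
      exact lt_irrefl _ this
    -- (ii) Hone α x ≤ G α
    have hc0 : ∀ m : ι, 0 < A m α := fun m => by
      rw [← (hA1 m).1]
      exact (hA2 m).2 ⟨le_rfl, zero_le_one⟩ hαIcc hα.1
    have hfactor_M0 : ∀ m ∈ M0,
        (1 - A m α) ^ (1 - Function.leftLim (fun β => δ m β x) (A m α)) = 1 - A m α := by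
      intro m hm
      have hg0 : δ m (A m α) x = 0 :=
        (hcf m).2.2.2 α hαIcc (lt_of_lt_of_le hα.2 (hmin m hm))
      have hzero : ∀ β ∈ Set.Ioo (0:ℝ) (A m α), δ m β x = 0 := by
        intro β hβ
        have hβIcc : β ∈ Set.Icc (0:ℝ) 1 := ⟨hβ.1.le, hβ.2.le.trans (hArange m α hαIcc).2⟩
        have hle : δ m β x ≤ δ m (A m α) x :=
          (hpath m).1 hβIcc (hArange m α hαIcc) hβ.2.le
        rw [hg0] at hle
        rcases hvals m β hβIcc with h | h
        · exact h
        · rw [h] at hle; norm_num at hle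
      rw [leftLim_eq_const' (hc0 m) hzero, sub_zero, Real.rpow_one]
    have hfactor_any : ∀ m : ι,
        (1 - A m α) ^ (1 - Function.leftLim (fun β => δ m β x) (A m α)) ∈
          Set.Icc (0:ℝ) 1 := by
      intro m
      by_cases hex : ∃ β ∈ Set.Ioo (0:ℝ) (A m α), δ m β x = 1
      · obtain ⟨β0, hβ0, hβ0v⟩ := hex
        have hone : ∀ β ∈ Set.Ioo β0 (A m α), δ m β x = 1 := by
          intro β hβ
          have hβIcc : β ∈ Set.Icc (0:ℝ) 1 :=
            ⟨hβ0.1.le.trans hβ.1.le, hβ.2.le.trans (hArange m α hαIcc).2⟩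
          have hβ0Icc : β0 ∈ Set.Icc (0:ℝ) 1 :=
            ⟨hβ0.1.le, hβ0.2.le.trans (hArange m α hαIcc).2⟩
          have hle : δ m β0 x ≤ δ m β x := (hpath m).1 hβ0Icc hβIcc hβ.1.le
          rw [hβ0v] at hle
          rcases hvals m β hβIcc with h | h
          · rw [h] at hle; norm_num at hle
          · exact h
        rw [leftLim_eq_const' hβ0.2 hone, sub_self, Real.rpow_zero]
        exact ⟨zero_le_one, le_rfl⟩
      · push_neg at hex
        have hzero : ∀ β ∈ Set.Ioo (0:ℝ) (A m α), δ m β x = 0 := by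
          intro β hβ
          have hβIcc : β ∈ Set.Icc (0:ℝ) 1 := ⟨hβ.1.le, hβ.2.le.trans (hArange m α hαIcc).2⟩
          rcases hvals m β hβIcc with h | h
          · exact h
          · exact absurd h (hex β hβ)
        rw [leftLim_eq_const' (hc0 m) hzero, sub_zero, Real.rpow_one]
        have := hArange m α hαIcc
        constructor <;> [linarith [this.2]; linarith [this.1]]
    have hHle : Hone A δ α x ≤ G α := by
      rw [Hone, ← hpart, Finset.prod_union hdisj, Finset.prod_congr rfl hfactor_M0]
      refine mul_le_of_le_one_right ?_ ?_
      · exact Finset.prod_nonneg fun m _ => by linarith [(hArange m α hαIcc).2]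
      · exact Finset.prod_le_one (fun m _ => (hfactor_any m).1) fun m _ => (hfactor_any m).2
    linarith
  -- pass to the limit: 1 - q ≤ G (T m1)
  have hTm1SS : T m1 ∈ SS := by
    rcases eq_or_lt_of_le (hcf m1).1.1 with h0 | h0
    · exact ⟨(hcf m1).1, by rw [← h0, hG0]; linarith [hq.1]⟩
    · refine ⟨(hcf m1).1, ?_⟩
      have hcl : T m1 ∈ closure (Set.Ioo (0:ℝ) (T m1)) := by
        rw [closure_Ioo (ne_of_lt h0)]
        exact ⟨h0.le, le_rfl⟩
      haveI hnb : (𝓝[Set.Ioo (0:ℝ) (T m1)] (T m1)).NeBot :=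
        mem_closure_iff_nhdsWithin_neBot.1 hcl
      have htend : Tendsto G (𝓝[Set.Ioo (0:ℝ) (T m1)] (T m1)) (𝓝 (G (T m1))) := by
        apply tendsto_finset_prod
        intro m _
        have : ContinuousWithinAt (A m) (Set.Icc 0 1) (T m1) := (hA2 m).1 _ (hcf m1).1
        exact (continuousWithinAt_const.sub
          (this.mono (Set.Ioo_subset_Icc_self.trans (Set.Icc_subset_Icc le_rfl (hcf m1).1.2))))
      exact ge_of_tendsto htend (eventually_mem_nhdsWithin.mono fun α hα => hGbound α hα)
  have hTm1star : T m1 ≤ sstar := le_csSup hSSbdd hTm1SS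
  exact ⟨m1, hm1, (hcf m1).2.2.1 sstar hsstarIcc hTm1star⟩

/-- **Theorem 1 (strong FWER control).** -/
theorem fwer_strong_control_weak_size
    {X ι : Type*} [MeasurableSpace X] [Fintype ι] [DecidableEq ι] [Nonempty ι]
    (P : Measure X) [IsProbabilityMeasure P]
    -- the partition 𝓜 = 𝓜₀(P) ∪ 𝓜₁(P)
    (M0 M1 : Finset ι) (hpart : M0 ∪ M1 = Finset.univ) (hdisj : Disjoint M0 M1)
    -- the multiple decision process Δ and the size function A
    (δ : ι → ℝ → X → ℝ) (A : ι → ℝ → ℝ)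
    (hmeas : ∀ m, ∀ α ∈ Set.Icc (0:ℝ) 1, Measurable (δ m α))
    (hvals : ∀ m, ∀ α ∈ Set.Icc (0:ℝ) 1, ∀ x, δ m α x = 0 ∨ δ m α x = 1)
    -- (D1)
    (hD1 : ∀ m, ∀ᵐ x ∂P, δ m 0 x = 0 ∧ δ m 1 x = 1)
    -- (D2): nondecreasing right-continuous {0,1}-valued paths
    (hD2 : ∀ᵐ x ∂P, ∀ m, MonotoneOn (fun α => δ m α x) (Set.Icc 0 1) ∧
      ∀ α ∈ Set.Ico (0:ℝ) 1, ContinuousWithinAt (fun β => δ m β x) (Set.Ici α) α)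
    -- (D3): the null and alternative families are independent of each other,
    -- and the null processes are mutually independent
    (hD3a : Indep (⨆ m ∈ M0, procSigma (δ m)) (⨆ m ∈ M1, procSigma (δ m)) P)
    (hD3b : iIndep (fun m : {m // m ∈ M0} => procSigma (δ (m : ι))) P)
    -- (D4'): each null decision function has size at most α
    (hD4 : ∀ m ∈ M0, ∀ α ∈ Set.Icc (0:ℝ) 1, ∫ x, δ m α x ∂P ≤ α)
    -- (A1)–(A3)
    (hArange : ∀ m, ∀ α ∈ Set.Icc (0:ℝ) 1, A m α ∈ Set.Icc (0:ℝ) 1)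
    (hA1 : ∀ m, A m 0 = 0 ∧ A m 1 = 1)
    (hA2 : ∀ m, ContinuousOn (A m) (Set.Icc 0 1) ∧ StrictMonoOn (A m) (Set.Icc 0 1))
    (hA3 : ∀ α ∈ Set.Icc (0:ℝ) 1, 1 - α ≤ ∏ m, (1 - A m α))
    (q : ℝ) (hq : q ∈ Set.Icc (0:ℝ) 1) :
    P {x | 1 ≤ Szero M0 A δ (alphaDag A δ q x) x} ≤ ENNReal.ofReal q := by
  classical
  rcases M0.eq_empty_or_nonempty with hM0e | hM0ne
  · have hempty : {x | 1 ≤ Szero M0 A δ (alphaDag A δ q x) x} = ∅ := by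
      ext x
      simp [Szero, hM0e]
    rw [hempty, measure_empty]
    exact zero_le
  set G : ℝ → ℝ := fun s => ∏ m ∈ M0, (1 - A m s) with hGdef
  set SS : Set ℝ := {s ∈ Set.Icc (0:ℝ) 1 | 1 - q ≤ G s} with hSSdef
  set sstar := sSup SS with hsstar
  have hG0 : G 0 = 1 := Finset.prod_eq_one fun m _ => by rw [(hA1 m).1, sub_zero]
  have h0SS : (0:ℝ) ∈ SS := ⟨⟨le_rfl, zero_le_one⟩, by rw [hG0]; linarith [hq.1]⟩
  have hSSbdd : BddAbove SS := ⟨1, fun s hs => hs.1.2⟩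
  have hSSne : SS.Nonempty := ⟨0, h0SS⟩
  have hsstarIcc : sstar ∈ Set.Icc (0:ℝ) 1 :=
    ⟨le_csSup hSSbdd h0SS, csSup_le hSSne fun s hs => hs.1.2⟩
  have hAstar : ∀ m, A m sstar ∈ Set.Icc (0:ℝ) 1 := fun m => hArange m sstar hsstarIcc
  -- `G sstar ≥ 1 - q` by closedness
  have hGcont : ContinuousOn G (Set.Icc 0 1) := by
    intro s hs
    exact tendsto_finset_prod _ fun m _ => continuousWithinAt_const.sub ((hA2 m).1 s hs)
  have hSSclosed : IsClosed SS := by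
    have : SS = Set.Icc (0:ℝ) 1 ∩ G ⁻¹' (Set.Ici (1 - q)) := by
      ext s
      simp only [hSSdef, Set.mem_setOf_eq, Set.mem_inter_iff, Set.mem_preimage, Set.mem_Ici]
    rw [this]
    exact hGcont.preimage_isClosed_of_isClosed isClosed_Icc isClosed_Ici
  have hGsstar : 1 - q ≤ G sstar := (hSSclosed.csSup_mem hSSne hSSbdd).2
  -- rejection events at time `sstar`
  set B : ι → Set X := fun m => (fun x => δ m (A m sstar) x) ⁻¹' {1} with hBdef
  have hBmeas : ∀ m, MeasurableSet (B m) :=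
    fun m => hmeas m _ (hAstar m) (measurableSet_singleton 1)
  -- a.e. inclusion of the bad event into `⋃ m ∈ M0, B m`
  have hae : ∀ᵐ x ∂P, (∀ m, δ m 0 x = 0 ∧ δ m 1 x = 1) ∧
      ∀ m, MonotoneOn (fun α => δ m α x) (Set.Icc 0 1) ∧
        ∀ α ∈ Set.Ico (0:ℝ) 1, ContinuousWithinAt (fun β => δ m β x) (Set.Ici α) α :=
    (ae_all_iff.2 hD1).and hD2
  have hsub : P {x | 1 ≤ Szero M0 A δ (alphaDag A δ q x) x} ≤ P (⋃ m ∈ M0, B m) := by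
    refine measure_mono_ae (hae.mono fun x hx hmem => ?_)
    obtain ⟨m, hm, hδ⟩ := det_key M0 M1 hpart hdisj δ A x (fun m α hα => hvals m α hα x)
      hx.1 hx.2 hArange hA1 hA2 q hq hM0ne hmem
    exact Set.mem_biUnion hm hδ
  refine le_trans hsub ?_
  -- independence and complement bookkeeping
  have hBc_mem : ∀ i : {m // m ∈ M0}, MeasurableSet[procSigma (δ (i : ι))] (B (i:ι))ᶜ := by
    intro i
    have hle : MeasurableSpace.comap (δ (i:ι) (A (i:ι) sstar)) Real.measurableSpace ≤
        procSigma (δ (i:ι)) :=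
      le_iSup₂ (f := fun (α : ℝ) (_ : α ∈ Set.Icc (0:ℝ) 1) =>
        MeasurableSpace.comap (δ (i:ι) α) Real.measurableSpace) (A (i:ι) sstar) (hAstar _)
    exact hle _ ⟨({1} : Set ℝ)ᶜ, (measurableSet_singleton 1).compl, rfl⟩
  have hprod := hD3b.meas_iInter (s := fun i : {m // m ∈ M0} => (B i.1)ᶜ) hBc_mem
  -- each individual rejection probability is at most `A m sstar`
  have hPB : ∀ i : {m // m ∈ M0}, P (B (i:ι)) ≤ ENNReal.ofReal (A (i:ι) sstar) := by
    intro i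
    have hfun : (fun x => δ (i:ι) (A (i:ι) sstar) x) =
        (B (i:ι)).indicator (fun _ => (1:ℝ)) := by
      ext x
      rcases hvals (i:ι) _ (hAstar _) x with h | h
      · rw [h, Set.indicator_of_notMem]
        intro hmem
        rw [Set.mem_preimage, Set.mem_singleton_iff] at hmem
        rw [hmem] at h
        norm_num at h
      · rw [h, Set.indicator_of_mem]
        rw [Set.mem_preimage, Set.mem_singleton_iff]
        exact h
    have hint : ∫ x, δ (i:ι) (A (i:ι) sstar) x ∂P = (P (B (i:ι))).toReal := by
      rw [hfun, integral_indicator_const (1:ℝ) (hBmeas _), smul_eq_mul, mul_one, measureReal_def]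
    have hle := hD4 (i:ι) i.2 (A (i:ι) sstar) (hAstar _)
    rw [hint] at hle
    exact (ENNReal.le_ofReal_iff_toReal_le (measure_ne_top P _) (hAstar (i:ι)).1).2 hle
  have hPBc : ∀ i : {m // m ∈ M0},
      ENNReal.ofReal (1 - A (i:ι) sstar) ≤ P ((B (i:ι))ᶜ) := by
    intro i
    rw [prob_compl_eq_one_sub (hBmeas _)]
    have h1 : ENNReal.ofReal (1 - A (i:ι) sstar) + ENNReal.ofReal (A (i:ι) sstar) = 1 := by
      rw [← ENNReal.ofReal_add (by linarith [(hAstar (i:ι)).2]) (hAstar (i:ι)).1]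
      norm_num
    calc ENNReal.ofReal (1 - A (i:ι) sstar)
        = 1 - ENNReal.ofReal (A (i:ι) sstar) := by
          rw [← h1, ENNReal.add_sub_cancel_right ENNReal.ofReal_ne_top]
      _ ≤ 1 - P (B (i:ι)) := tsub_le_tsub_left (hPB i) 1
  -- rewrite the union as complement of the intersection
  have hUeq : (⋃ m ∈ M0, B m) = (⋂ i : {m // m ∈ M0}, (B (i:ι))ᶜ)ᶜ := by
    rw [Set.compl_iInter]
    simp only [compl_compl]
    ext x
    simp only [Set.mem_iUnion]
    exact ⟨fun ⟨m, hm, h⟩ => ⟨⟨m, hm⟩, h⟩, fun ⟨i, h⟩ => ⟨i, i.2, h⟩⟩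
  rw [hUeq, prob_compl_eq_one_sub (MeasurableSet.iInter fun i => (hBmeas _).compl), hprod]
  -- final computation
  have hstep : ENNReal.ofReal (1 - q) ≤ ∏ i : {m // m ∈ M0}, P ((B (i:ι))ᶜ) := by
    calc ENNReal.ofReal (1 - q) ≤ ENNReal.ofReal (G sstar) :=
          ENNReal.ofReal_le_ofReal hGsstar
      _ = ∏ i : {m // m ∈ M0}, ENNReal.ofReal (1 - A (i:ι) sstar) := by
          have hGs : G sstar = ∏ m ∈ M0, (1 - A m sstar) := rfl
          rw [hGs, ← Finset.prod_coe_sort M0 (fun m => 1 - A m sstar)]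
          exact ENNReal.ofReal_prod_of_nonneg fun i _ => by linarith [(hAstar (i:ι)).2]
      _ ≤ ∏ i : {m // m ∈ M0}, P ((B (i:ι))ᶜ) :=
          Finset.prod_le_prod' fun i _ => hPBc i
  refine tsub_le_iff_right.2 ?_
  calc (1:ℝ≥0∞) = ENNReal.ofReal q + ENNReal.ofReal (1 - q) := by
        rw [← ENNReal.ofReal_add hq.1 (by linarith [hq.2])]
        norm_num
    _ ≤ ENNReal.ofReal q + ∏ i : {m // m ∈ M0}, P ((B (i:ι))ᶜ) :=
        add_le_add_right hstep _


end
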